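/- Let S_1, S_2, S_3 be nonzero complex numbers and A_1, A_2, A_3 the Maxwell matrices (A_j e_j = 0, A_j e_{j+1} = -i e_{j+2}, A_j e_{j+2} = i e_{j+1}, indices mod 3). If M, N are invertible 3×3 complex matrices satisfying S_j^{-1} N A_j = A_j M for j = 1,2,3, then there exists γ ∈ ℂ \ {0} with M = γ·diag(S_1, S_2, S_3) and N = γ·diag(S_2S_3, S_1S_3, S_1S_2). Conversely these M, N satisfy the relations. -/
import Mathlib


open Matrix

/-- The 3×3 Maxwell matrices. -/
def maxA : Fin 3 → Matrix (Fin 3) (Fin 3) ℂ :=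
  ![!![0, 0, 0; 0, 0, -Complex.I; 0, Complex.I, 0],
    !![0, 0, Complex.I; 0, 0, 0; -Complex.I, 0, 0],
    !![0, -Complex.I, 0; Complex.I, 0, 0; 0, 0, 0]]

/-- If invertible `M, N` satisfy `Sⱼ⁻¹ N Aⱼ = Aⱼ M` for the three Maxwell
matrices, then `M = γ diag(S₁,S₂,S₃)` and `N = γ diag(S₂S₃, S₁S₃, S₁S₂)` for
some nonzero scalar `γ`; conversely these matrices satisfy the relation. -/
theorem maxwell_stretching_matrices (S : Fin 3 → ℂ) (hS : ∀ j, S j ≠ 0) :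
    (∀ M N : Matrix (Fin 3) (Fin 3) ℂ, IsUnit M.det → IsUnit N.det →
      (∀ j, (S j)⁻¹ • (N * maxA j) = maxA j * M) →
      ∃ γ : ℂ, γ ≠ 0 ∧ M = γ • Matrix.diagonal S ∧
        N = γ • Matrix.diagonal (fun j => S (j + 1) * S (j + 2))) ∧
    (∀ γ : ℂ, γ ≠ 0 → ∀ j,
      (S j)⁻¹ • ((γ • Matrix.diagonal (fun j => S (j + 1) * S (j + 2))) * maxA j)
        = maxA j * (γ • Matrix.diagonal S)) := by
  constructor
  · intro M N hM hN h
    have key : ∀ j, N * maxA j = S j • (maxA j * M) := by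
      intro j
      rw [← h j, smul_smul, mul_inv_cancel₀ (hS j), one_smul]
    have e : ∀ j k l : Fin 3, (N * maxA j) k l = S j * (maxA j * M) k l := by
      intro j k l; rw [key j]; rfl
    have q001 := e 0 0 1
    have q002 := e 0 0 2
    have q010 := e 0 1 0
    have q012 := e 0 1 2
    have q020 := e 0 2 0
    have q021 := e 0 2 1
    have q101 := e 1 0 1
    have q102 := e 1 0 2
    have q110 := e 1 1 0
    have q112 := e 1 1 2
    have q120 := e 1 2 0
    have q121 := e 1 2 1
    have q202 := e 2 0 2
    have q210 := e 2 1 0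
    have q212 := e 2 1 2
    have q220 := e 2 2 0
    have q221 := e 2 2 1
    simp [maxA, Matrix.mul_apply, Fin.sum_univ_three, Matrix.vecHead,
      Matrix.vecTail] at q001 q002 q010 q012 q020 q021 q101 q102 q110 q112 q120 q121 q202 q210 q212 q220 q221
    -- off-diagonal entries vanish
    have hM20 := q010.resolve_left (hS 0)
    have hM10 := q020.resolve_left (hS 0)
    have hM21 := q101.resolve_left (hS 1)
    have hM01 := q121.resolve_left (hS 1)
    have hM12 := q202.resolve_left (hS 2)
    have hM02 := q212.resolve_left (hS 2)
    -- diagonal relations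
    have hN00 : N 0 0 = S 1 * M 2 2 :=
      mul_right_cancel₀ Complex.I_ne_zero (by linear_combination q102)
    have hN11 : N 1 1 = S 2 * M 0 0 :=
      mul_right_cancel₀ Complex.I_ne_zero (by linear_combination q210)
    have hN22 : N 2 2 = S 1 * M 0 0 :=
      mul_right_cancel₀ Complex.I_ne_zero (by linear_combination q120)
    have hA : S 0 * M 2 2 = S 2 * M 0 0 :=
      mul_left_cancel₀ Complex.I_ne_zero (by linear_combination q210 - q012)
    have hB : S 0 * M 1 1 = S 1 * M 0 0 :=
      mul_left_cancel₀ Complex.I_ne_zero (by linear_combination q120 - q021)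
    -- M 0 0 ≠ 0 from invertibility
    have hdet : M.det = M 0 0 * (M 1 1 * M 2 2) := by
      rw [Matrix.det_fin_three, hM01, hM02, hM10, hM12, hM20, hM21]; ring
    have hM00 : M 0 0 ≠ 0 := by
      intro h0
      exact hM.ne_zero (by rw [hdet, h0, zero_mul])
    have hg0 : M 0 0 = M 0 0 / S 0 * S 0 := (div_mul_cancel₀ _ (hS 0)).symm
    have hg1 : M 1 1 = M 0 0 / S 0 * S 1 := by
      rw [div_mul_eq_mul_div, eq_div_iff (hS 0)]; linear_combination hB
    have hg2 : M 2 2 = M 0 0 / S 0 * S 2 := by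
      rw [div_mul_eq_mul_div, eq_div_iff (hS 0)]; linear_combination hA
    have hn0 : N 0 0 = M 0 0 / S 0 * (S 1 * S 2) := by
      rw [div_mul_eq_mul_div, eq_div_iff (hS 0)]; linear_combination S 1 * hA + S 0 * hN00
    have hn1 : N 1 1 = M 0 0 / S 0 * (S 2 * S 0) := by
      rw [div_mul_eq_mul_div, eq_div_iff (hS 0)]; linear_combination S 0 * hN11
    have hn2 : N 2 2 = M 0 0 / S 0 * (S 0 * S 1) := by
      rw [div_mul_eq_mul_div, eq_div_iff (hS 0)]; linear_combination S 0 * hN22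
    refine ⟨M 0 0 / S 0, div_ne_zero hM00 (hS 0), ?_, ?_⟩
    · ext i k
      fin_cases i <;> fin_cases k <;>
        simp [Matrix.diagonal, hM01, hM02, hM10, hM12, hM20, hM21, ← hg0, ← hg1, ← hg2]
    · ext i k
      fin_cases i <;> fin_cases k <;>
        simp [Matrix.diagonal, q001, q002, q110, q112, q220, q221, ← hn0, ← hn1, ← hn2]
  · intro γ hγ j
    fin_cases j <;> ext k l <;> fin_cases k <;> fin_cases l <;>
      simp [maxA, Matrix.mul_apply, Fin.sum_univ_three, Matrix.diagonal,
        Matrix.vecHead, Matrix.vecTail] <;>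
      field_simp [hS 0, hS 1, hS 2] <;> ring
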